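/- Let 0 < λ < ‖K̂‖_∞^{−1}, let u be a bounded measurable 2π-periodic function, and let μ_u be the probability measure on [0,2π] with density e^{−u(θ)} / ∫₀^{2π} e^{−u}. If v is a bounded measurable 2π-periodic function satisfying, for every θ, v(θ) = λ [ ∫₀^{2π} v dμ_u · ∫₀^{2π} K̂(θ − θ') dμ_u(θ') − ∫₀^{2π} K̂(θ − θ') v(θ') dμ_u(θ') ], then v ≡ 0. -/

import Mathlib

open MeasureTheory Filter Topology Real intervalIntegral

/-- `Γ[u](θ) = (∫₀^{2π} e^{-u})⁻¹ ∫₀^{2π} K̂(θ - θ') e^{-u(θ')} dθ'`. -/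
noncomputable def Gam (K u : ℝ → ℝ) (θ : ℝ) : ℝ :=
  (∫ t in (0:ℝ)..(2 * π), Real.exp (-(u t)))⁻¹ *
    ∫ t in (0:ℝ)..(2 * π), K (θ - t) * Real.exp (-(u t))

/-- Membership in `X = {u ∈ L²([0,2π]) : u(θ) = u(θ+π) a.e., u(θ) = u(2π-θ) a.e.,
∫₀^{2π} u = 0}`, for a (2π-periodic) representative `u : ℝ → ℝ`. -/
def MemX (u : ℝ → ℝ) : Prop :=
  MemLp u 2 (volume.restrict (Set.Ioc (0:ℝ) (2 * π))) ∧
  (∀ᵐ θ : ℝ, u (θ + π) = u θ) ∧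
  (∀ᵐ θ : ℝ, u (2 * π - θ) = u θ) ∧
  (∫ θ in (0:ℝ)..(2 * π), u θ) = 0

/-- `‖K̂‖_∞ = sup_{θ ∈ [0,2π]} |K̂(θ)|`. -/
noncomputable def supNorm (K : ℝ → ℝ) : ℝ := ⨆ θ : Set.Icc (0:ℝ) (2 * π), |K θ|

/-- The mean `∫₀^{2π} f dμ_u` of `f` against the probability measure `μ_u` with
density `e^{-u}/∫₀^{2π} e^{-u}`. -/
noncomputable def mAvg (u f : ℝ → ℝ) : ℝ :=
  (∫ t in (0:ℝ)..(2 * π), Real.exp (-(u t)))⁻¹ *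
    ∫ t in (0:ℝ)..(2 * π), f t * Real.exp (-(u t))

set_option maxHeartbeats 4000000 in
private lemma kernel_trivial_aux (K : ℝ → ℝ) (hKcont : Continuous K)
    (hKper : Function.Periodic K (2 * π))
    (lam : ℝ) (hlam0 : 0 < lam) (hlam : lam < (supNorm K)⁻¹)
    (u : ℝ → ℝ) (hu : Measurable u) (huper : Function.Periodic u (2 * π))
    (hubd : ∃ M : ℝ, ∀ θ, |u θ| ≤ M)
    (v : ℝ → ℝ) (hv : Measurable v) (hvper : Function.Periodic v (2 * π))
    (hvbd : ∃ M : ℝ, ∀ θ, |v θ| ≤ M)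
    (heq : ∀ θ : ℝ, v θ = lam *
      (mAvg u v * mAvg u (fun t => K (θ - t)) - mAvg u (fun t => K (θ - t) * v t))) :
    ∀ θ : ℝ, v θ = 0 := by
  obtain ⟨Mu, hMu⟩ := hubd
  obtain ⟨Mv, hMv⟩ := hvbd
  have hπ : 0 < π := Real.pi_pos
  have h2π : (0:ℝ) ≤ 2 * π := by positivity
  set ν : Measure ℝ := volume.restrict (Set.Ioc (0:ℝ) (2*π)) with hνdef
  haveI hfin : IsFiniteMeasure ν := by
    constructor
    rw [hνdef, Measure.restrict_apply_univ]
    exact measure_Ioc_lt_top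
  have habs : ∀ (a b Ca Cb : ℝ), |a| ≤ Ca → |b| ≤ Cb → |a * b| ≤ Ca * Cb := by
    intro a b Ca Cb ha hb
    rw [abs_mul]
    exact mul_le_mul ha hb (abs_nonneg b) ((abs_nonneg a).trans ha)
  have habs2 : ∀ a b : ℝ, |a - b| ≤ |a| + |b| := by
    intro a b
    rw [sub_eq_add_neg]
    exact (abs_add_le _ _).trans (by rw [abs_neg])
  have hint : ∀ (f : ℝ → ℝ) (C : ℝ), Measurable f → (∀ t, |f t| ≤ C) → Integrable f ν := by
    intro f C hf hC
    exact (integrable_const C).mono' hf.aestronglyMeasurable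
      (ae_of_all _ (by simpa [Real.norm_eq_abs] using hC))
  -- bound on K
  have hKbdd : BddAbove (Set.range fun θ : Set.Icc (0:ℝ) (2*π) => |K ↑θ|) := by
    have h : BddAbove ((fun x => |K x|) '' Set.Icc (0:ℝ) (2*π)) :=
      (isCompact_Icc.image hKcont.abs).bddAbove
    rwa [Set.image_eq_range] at h
  set Kb := supNorm K with hKbdef
  have hKb : ∀ x : ℝ, |K x| ≤ Kb := by
    intro x
    obtain ⟨y, hy, hxy⟩ := hKper.exists_mem_Ico₀ (by positivity) x
    have hy' : y ∈ Set.Icc (0:ℝ) (2*π) := Set.mem_Icc_of_Ico hy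
    calc |K x| = |K y| := by rw [hxy]
    _ ≤ Kb := le_ciSup hKbdd ⟨y, hy'⟩
  have hKbnn : 0 ≤ Kb := (abs_nonneg (K 0)).trans (hKb 0)
  have hKb0 : 0 < Kb := by
    rcases hKbnn.lt_or_eq with hlt | heq0
    · exact hlt
    · exfalso
      rw [← heq0, inv_zero] at hlam
      linarith
  have hlamKb : lam * Kb < 1 := by
    have h1 := mul_lt_mul_of_pos_right hlam hKb0
    rwa [inv_mul_cancel₀ hKb0.ne'] at h1
  clear_value Kb
  -- the density
  set φ : ℝ → ℝ := fun t => Real.exp (-(u t)) with hφdef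
  have hφpos : ∀ t, 0 < φ t := fun t => Real.exp_pos _
  have hφm : Measurable φ := Real.measurable_exp.comp hu.neg
  have hφbd : ∀ t, |φ t| ≤ Real.exp Mu := by
    intro t
    rw [abs_of_pos (hφpos t)]
    exact Real.exp_le_exp.mpr (by have := abs_le.mp (hMu t); linarith)
  set Z := ∫ t, φ t ∂ν with hZdef
  have hφint : Integrable φ ν := hint φ _ hφm hφbd
  have hZpos : 0 < Z := by
    have h1 : ∫ _t, Real.exp (-Mu) ∂ν ≤ Z :=
      integral_mono (integrable_const _) hφint
        (fun t => Real.exp_le_exp.mpr (by have := abs_le.mp (hMu t); linarith))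
    have h2 : ∫ _t, Real.exp (-Mu) ∂ν = (2*π) * Real.exp (-Mu) := by
      rw [MeasureTheory.integral_const, hνdef, measureReal_def, Measure.restrict_apply_univ, Real.volume_Ioc,
        smul_eq_mul]
      norm_num [ENNReal.toReal_ofReal h2π, hπ.le]
    have h3 : 0 < (2*π) * Real.exp (-Mu) := by positivity
    linarith only [h1, h2, h3]
  have hmAvg : ∀ f : ℝ → ℝ, mAvg u f = Z⁻¹ * ∫ t, f t * φ t ∂ν := by
    intro f
    rw [mAvg, intervalIntegral.integral_of_le h2π, intervalIntegral.integral_of_le h2π]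
  clear_value Z
  -- sup and inf of v
  have hrange : (Set.range v).Nonempty := ⟨v 0, 0, rfl⟩
  have hSb : BddAbove (Set.range v) := ⟨Mv, by rintro x ⟨θ, rfl⟩; exact (le_abs_self _).trans (hMv θ)⟩
  have hIb : BddBelow (Set.range v) := ⟨-Mv, by rintro x ⟨θ, rfl⟩; have := abs_le.mp (hMv θ); linarith⟩
  set S := sSup (Set.range v) with hSdef
  set I := sInf (Set.range v) with hIdef
  have hvS : ∀ θ, v θ ≤ S := fun θ => le_csSup hSb ⟨θ, rfl⟩
  have hIv : ∀ θ, I ≤ v θ := fun θ => csInf_le hIb ⟨θ, rfl⟩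
  have hIS : I ≤ S := (hIv 0).trans (hvS 0)
  clear_value S I
  have hvφint : Integrable (fun t => v t * φ t) ν :=
    hint _ (Mv * Real.exp Mu) (hv.mul hφm) (fun t => habs _ _ _ _ (hMv t) (hφbd t))
  set c := mAvg u v with hcdef
  have hc : c = Z⁻¹ * ∫ t, v t * φ t ∂ν := hcdef.trans (hmAvg v)
  clear_value c
  have hcZ : ∫ t, v t * φ t ∂ν = c * Z := by
    rw [hc]
    field_simp
  have hcS : c ≤ S := by
    have h1 : ∫ t, v t * φ t ∂ν ≤ ∫ t, S * φ t ∂ν :=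
      integral_mono hvφint (hφint.const_mul S)
        (fun t => mul_le_mul_of_nonneg_right (hvS t) (hφpos t).le)
    rw [MeasureTheory.integral_const_mul, hcZ, ← hZdef] at h1
    exact le_of_mul_le_mul_right h1 hZpos
  have hIc : I ≤ c := by
    have h1 : ∫ t, I * φ t ∂ν ≤ ∫ t, v t * φ t ∂ν :=
      integral_mono (hφint.const_mul I) hvφint
        (fun t => mul_le_mul_of_nonneg_right (hIv t) (hφpos t).le)
    rw [MeasureTheory.integral_const_mul, hcZ, ← hZdef] at h1
    exact le_of_mul_le_mul_right h1 hZpos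
  have hcbd : |c| ≤ |S| + |I| := by
    rcases abs_cases c with ⟨h, _⟩ | ⟨h, _⟩ <;>
      [skip; skip] <;>
    · have := le_abs_self S
      have := le_abs_self I
      have := neg_abs_le S
      have := neg_abs_le I
      linarith
  -- the set where v < c
  set A : Set ℝ := {t | v t < c} with hAdef
  have hA : MeasurableSet A := measurableSet_lt hv measurable_const
  set P := ∫ t in A, φ t ∂ν with hPdef
  set Q := ∫ t in Aᶜ, φ t ∂ν with hQdef
  have hPQ : P + Q = Z := (integral_add_compl hA hφint).trans hZdef.symm
  have hP0 : 0 ≤ P := setIntegral_nonneg hA (fun t _ => (hφpos t).le)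
  have hQ0 : 0 ≤ Q := setIntegral_nonneg hA.compl (fun t _ => (hφpos t).le)
  clear_value P Q
  have hwφint : Integrable (fun t => (c - v t) * φ t) ν :=
    hint _ ((|S| + |I| + Mv) * Real.exp Mu) ((measurable_const.sub hv).mul hφm)
      (fun t => habs _ _ _ _ ((habs2 c (v t)).trans (by have := hMv t; linarith)) (hφbd t))
  set B := ∫ t in A, (c - v t) * φ t ∂ν with hBdef
  have hwφ0 : ∫ t, (c - v t) * φ t ∂ν = 0 := by
    have hh : (fun t => (c - v t) * φ t) = fun t => c * φ t - v t * φ t := by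
      funext t; ring
    rw [hh, integral_sub (hφint.const_mul c) hvφint, MeasureTheory.integral_const_mul, hcZ, ← hZdef]
    ring
  have hB0 : 0 ≤ B :=
    setIntegral_nonneg hA (fun t ht => mul_nonneg
      (by simp only [hAdef, Set.mem_setOf_eq] at ht; linarith) (hφpos t).le)
  have hBc : ∫ t in Aᶜ, (c - v t) * φ t ∂ν = -B := by
    have h1 := integral_add_compl hA hwφint
    rw [hwφ0, ← hBdef] at h1
    linarith only [h1]
  have hBP : B ≤ (c - I) * P := by
    have h1 : B ≤ ∫ t in A, (c - I) * φ t ∂ν := by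
      rw [hBdef]
      apply setIntegral_mono_on hwφint.integrableOn (hφint.const_mul (c - I)).integrableOn hA
      intro t _
      exact mul_le_mul_of_nonneg_right (by linarith [hIv t]) (hφpos t).le
    rwa [MeasureTheory.integral_const_mul, ← hPdef] at h1
  have hBQ : B ≤ (S - c) * Q := by
    have h1 : ∫ t in Aᶜ, (c - S) * φ t ∂ν ≤ ∫ t in Aᶜ, (c - v t) * φ t ∂ν := by
      apply setIntegral_mono_on (hφint.const_mul (c - S)).integrableOn hwφint.integrableOn hA.compl
      intro t _
      exact mul_le_mul_of_nonneg_right (by linarith [hvS t]) (hφpos t).le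
    rw [hBc, MeasureTheory.integral_const_mul, ← hQdef] at h1
    have h2 : (S - c) * Q = -((c - S) * Q) := by ring
    linarith only [h1, h2]
  clear_value B
  -- per-θ integrability and bounds
  have hKθm : ∀ θ : ℝ, Measurable (fun t => K (θ - t)) := fun θ =>
    hKcont.measurable.comp (measurable_const.sub measurable_id)
  have hKwint : ∀ θ, Integrable (fun t => K (θ - t) * ((c - v t) * φ t)) ν := fun θ =>
    hint _ (Kb * ((|S| + |I| + Mv) * Real.exp Mu)) ((hKθm θ).mul ((measurable_const.sub hv).mul hφm))
      (fun t => habs _ _ _ _ (hKb _)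
        (habs _ _ _ _ ((habs2 c (v t)).trans (by have := hMv t; linarith)) (hφbd t)))
  have hGub : ∀ θ, ∫ t, K (θ - t) * ((c - v t) * φ t) ∂ν ≤ 2 * (Kb * B) := by
    intro θ
    have hsplit := integral_add_compl hA (hKwint θ)
    have hup1 : ∫ t in A, K (θ - t) * ((c - v t) * φ t) ∂ν ≤ Kb * B := by
      have h1 : ∫ t in A, K (θ - t) * ((c - v t) * φ t) ∂ν ≤ ∫ t in A, Kb * ((c - v t) * φ t) ∂ν := by
        apply setIntegral_mono_on (hKwint θ).integrableOn (hwφint.const_mul Kb).integrableOn hA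
        intro t ht
        have hw : 0 ≤ (c - v t) * φ t := mul_nonneg
          (by simp only [hAdef, Set.mem_setOf_eq] at ht; linarith) (hφpos t).le
        exact mul_le_mul_of_nonneg_right ((le_abs_self _).trans (hKb _)) hw
      rwa [MeasureTheory.integral_const_mul, ← hBdef] at h1
    have hup2 : ∫ t in Aᶜ, K (θ - t) * ((c - v t) * φ t) ∂ν ≤ Kb * B := by
      have h1 : ∫ t in Aᶜ, K (θ - t) * ((c - v t) * φ t) ∂ν ≤ ∫ t in Aᶜ, (-Kb) * ((c - v t) * φ t) ∂ν := by
        apply setIntegral_mono_on (hKwint θ).integrableOn (hwφint.const_mul (-Kb)).integrableOn hA.compl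
        intro t ht
        have hw : (c - v t) * φ t ≤ 0 :=
          mul_nonpos_iff.mpr (Or.inr ⟨by
            simp only [hAdef, Set.mem_compl_iff, Set.mem_setOf_eq, not_lt] at ht
            linarith only [ht], (hφpos t).le⟩)
        have hK : -Kb ≤ K (θ - t) := neg_le_of_abs_le (hKb _)
        exact mul_le_mul_of_nonpos_right hK hw
      rw [MeasureTheory.integral_const_mul, hBc] at h1
      have h2 : (-Kb) * (-B) = Kb * B := by ring
      linarith only [h1, h2]
    linarith only [hsplit, hup1, hup2]
  have hGlb : ∀ θ, -(2 * (Kb * B)) ≤ ∫ t, K (θ - t) * ((c - v t) * φ t) ∂ν := by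
    intro θ
    have hsplit := integral_add_compl hA (hKwint θ)
    have hup1 : -(Kb * B) ≤ ∫ t in A, K (θ - t) * ((c - v t) * φ t) ∂ν := by
      have h1 : ∫ t in A, (-Kb) * ((c - v t) * φ t) ∂ν ≤ ∫ t in A, K (θ - t) * ((c - v t) * φ t) ∂ν := by
        apply setIntegral_mono_on (hwφint.const_mul (-Kb)).integrableOn (hKwint θ).integrableOn hA
        intro t ht
        have hw : 0 ≤ (c - v t) * φ t := mul_nonneg
          (by simp only [hAdef, Set.mem_setOf_eq] at ht; linarith) (hφpos t).le
        exact mul_le_mul_of_nonneg_right (neg_le_of_abs_le (hKb _)) hw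
      rw [MeasureTheory.integral_const_mul, ← hBdef] at h1
      linarith only [h1]
    have hup2 : -(Kb * B) ≤ ∫ t in Aᶜ, K (θ - t) * ((c - v t) * φ t) ∂ν := by
      have h1 : ∫ t in Aᶜ, Kb * ((c - v t) * φ t) ∂ν ≤ ∫ t in Aᶜ, K (θ - t) * ((c - v t) * φ t) ∂ν := by
        apply setIntegral_mono_on (hwφint.const_mul Kb).integrableOn (hKwint θ).integrableOn hA.compl
        intro t ht
        have hw : (c - v t) * φ t ≤ 0 :=
          mul_nonpos_iff.mpr (Or.inr ⟨by
            simp only [hAdef, Set.mem_compl_iff, Set.mem_setOf_eq, not_lt] at ht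
            linarith only [ht], (hφpos t).le⟩)
        have hK : K (θ - t) ≤ Kb := (le_abs_self _).trans (hKb _)
        exact mul_le_mul_of_nonpos_right hK hw
      rw [MeasureTheory.integral_const_mul, hBc] at h1
      have h2 : Kb * (-B) = -(Kb * B) := by ring
      linarith only [h1, h2]
    linarith only [hsplit, hup1, hup2]
  -- the fixed-point identity in integral form
  have hviden : ∀ θ, v θ = lam * (Z⁻¹ * ∫ t, K (θ - t) * ((c - v t) * φ t) ∂ν) := by
    intro θ
    have hKφint : Integrable (fun t => K (θ - t) * φ t) ν :=
      hint _ (Kb * Real.exp Mu) ((hKθm θ).mul hφm) (fun t => habs _ _ _ _ (hKb _) (hφbd t))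
    have hKvφint : Integrable (fun t => K (θ - t) * (v t * φ t)) ν :=
      hint _ (Kb * (Mv * Real.exp Mu)) ((hKθm θ).mul (hv.mul hφm))
        (fun t => habs _ _ _ _ (hKb _) (habs _ _ _ _ (hMv t) (hφbd t)))
    have hexp : (fun t => K (θ - t) * ((c - v t) * φ t)) =
        fun t => c * (K (θ - t) * φ t) - K (θ - t) * (v t * φ t) := by
      funext t; ring
    rw [heq θ, hexp, integral_sub (hKφint.const_mul c) hKvφint, MeasureTheory.integral_const_mul]
    rw [hmAvg (fun t => K (θ - t)), hmAvg (fun t => K (θ - t) * v t)]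
    have hassoc : (fun t => K (θ - t) * v t * φ t) = fun t => K (θ - t) * (v t * φ t) := by
      funext t; ring
    rw [hassoc]
    ring
  set R := lam * (Z⁻¹ * (2 * (Kb * B))) with hRdef
  clear_value R
  have hvub : ∀ θ, v θ ≤ R := by
    intro θ
    rw [hviden θ, hRdef]
    exact mul_le_mul_of_nonneg_left
      (mul_le_mul_of_nonneg_left (hGub θ) (inv_nonneg.mpr hZpos.le)) hlam0.le
  have hvlb : ∀ θ, -R ≤ v θ := by
    intro θ
    rw [hviden θ, hRdef]
    have h1 := mul_le_mul_of_nonneg_left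
      (mul_le_mul_of_nonneg_left (hGlb θ) (inv_nonneg.mpr hZpos.le)) hlam0.le
    calc -(lam * (Z⁻¹ * (2 * (Kb * B))))
        = lam * (Z⁻¹ * -(2 * (Kb * B))) := by ring
      _ ≤ lam * (Z⁻¹ * ∫ t, K (θ - t) * ((c - v t) * φ t) ∂ν) := h1
  have hSR : S ≤ R := by
    rw [hSdef]
    exact csSup_le hrange (by rintro x ⟨θ, rfl⟩; exact hvub θ)
  have hIR : -R ≤ I := by
    rw [hIdef]
    exact le_csInf hrange (by rintro x ⟨θ, rfl⟩; exact hvlb θ)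
  -- arithmetic conclusion
  have hRZ : R * Z = lam * (2 * (Kb * B)) := by
    rw [hRdef]
    field_simp
  have e1 : 4 * ((c - I) * (S - c)) ≤ (S - I)^2 := by linarith only [sq_nonneg (S + I - 2*c)]
  have e2 : 4 * (P * Q) ≤ Z^2 := by
    rw [← hPQ]
    linarith only [sq_nonneg (P - Q)]
  have e3 : B * B ≤ ((c - I) * P) * ((S - c) * Q) :=
    mul_le_mul hBP hBQ hB0 (mul_nonneg (by linarith) hP0)
  have e12 : (4 * ((c - I) * (S - c))) * (4 * (P * Q)) ≤ (S - I)^2 * Z^2 :=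
    mul_le_mul e1 e2 (by positivity) (sq_nonneg _)
  have e4 : (4 * B)^2 ≤ ((S - I) * Z)^2 := by linarith only [e12, e3]
  have hT0 : 0 ≤ (S - I) * Z := mul_nonneg (by linarith) hZpos.le
  have e5 : 4 * B ≤ (S - I) * Z := by nlinarith only [e4, hB0, hT0]
  have key : Z * (S - I) ≤ Z * (2 * R) :=
    mul_le_mul_of_nonneg_left (by linarith only [hSR, hIR]) hZpos.le
  have key2 : Z * (S - I) ≤ 4 * (lam * (Kb * B)) := by linarith only [key, hRZ]
  have hSI : S ≤ I := by
    by_contra hcon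
    push_neg at hcon
    have h6 : lam * Kb * (4 * B) ≤ lam * Kb * ((S - I) * Z) :=
      mul_le_mul_of_nonneg_left e5 (mul_pos hlam0 hKb0).le
    have h7 : 0 < (S - I) * Z := mul_pos (by linarith only [hcon]) hZpos
    nlinarith only [key2, h6, h7, hlamKb]
  have hcI : c - I ≤ 0 := by linarith only [hcS, hSI]
  have hBle : B ≤ 0 := hBP.trans (mul_nonpos_iff.mpr (Or.inr ⟨hcI, hP0⟩))
  have hB : B = 0 := le_antisymm hBle hB0
  intro θ
  have h1 := hvub θ
  have h2 := hvlb θ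
  rw [hRdef, hB] at h1 h2
  simp only [mul_zero, neg_zero] at h1 h2
  linarith only [h1, h2]

/-- If `0 < λ < ‖K̂‖_∞⁻¹` and the bounded measurable `2π`-periodic `v` satisfies
`v = λ DΓ[u](v)` pointwise, then `v ≡ 0`. -/
theorem kernel_trivial (K : ℝ → ℝ) (hKcont : Continuous K)
    (hKper : Function.Periodic K (2 * π))
    (lam : ℝ) (hlam0 : 0 < lam) (hlam : lam < (supNorm K)⁻¹)
    (u : ℝ → ℝ) (hu : Measurable u) (huper : Function.Periodic u (2 * π))
    (hubd : ∃ M : ℝ, ∀ θ, |u θ| ≤ M)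
    (v : ℝ → ℝ) (hv : Measurable v) (hvper : Function.Periodic v (2 * π))
    (hvbd : ∃ M : ℝ, ∀ θ, |v θ| ≤ M)
    (heq : ∀ θ : ℝ, v θ = lam *
      (mAvg u v * mAvg u (fun t => K (θ - t)) - mAvg u (fun t => K (θ - t) * v t))) :
    ∀ θ : ℝ, v θ = 0 := by
  exact kernel_trivial_aux K hKcont hKper lam hlam0 hlam u hu huper hubd v hv hvper hvbd heq
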